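/- Uniqueness for the one-sided Dirichlet problem: let 0 < α < 1, a < b, and φ, ψ Schwartz functions with (D_right)^α φ = (D_right)^α ψ on [a,b) and φ = ψ on [b,∞). Then φ = ψ on [a,∞). -/

import Mathlib

open Real MeasureTheory

/-- The right fractional derivative of order `α`:
`(D_right)^α φ(x) = (1/Γ(-α)) ∫_x^∞ (φ(t) - φ(x))/(t-x)^{1+α} dt`. -/
noncomputable def Dright (α : ℝ) (φ : ℝ → ℝ) (x : ℝ) : ℝ :=
  (1 / Real.Gamma (-α)) * ∫ t in Set.Ioi x, (φ t - φ x) / (t - x) ^ (1 + α)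


lemma schwartz_bound (u : SchwartzMap ℝ ℝ) : ∃ C, 0 < C ∧ ∀ x, |u x| ≤ C := by
  obtain ⟨C, hC, h⟩ := u.decay 0 0
  exact ⟨C, hC, fun x => by simpa [norm_iteratedFDeriv_zero] using h x⟩

lemma schwartz_deriv_bound (u : SchwartzMap ℝ ℝ) : ∃ C, 0 < C ∧ ∀ x, |deriv u x| ≤ C := by
  obtain ⟨C, hC, h⟩ := schwartz_bound (SchwartzMap.derivCLM ℝ ℝ u)
  exact ⟨C, hC, fun x => by simpa [SchwartzMap.derivCLM_apply] using h x⟩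

lemma integrand_integrable (α : ℝ) (hα : 0 < α) (hα1 : α < 1) (u : SchwartzMap ℝ ℝ) (x : ℝ) :
    IntegrableOn (fun t => (u t - u x) / (t - x) ^ (1 + α)) (Set.Ioi x) := by
  obtain ⟨B, hB, hBle⟩ := schwartz_bound u
  obtain ⟨C, hC, hCle⟩ := schwartz_deriv_bound u
  have hcont : ContinuousOn (fun t => (u t - u x) / (t - x) ^ (1 + α)) (Set.Ioi x) := by
    apply ContinuousOn.div
    · exact (u.continuous.sub continuous_const).continuousOn
    · exact (continuous_id.sub continuous_const).continuousOn.rpow_const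
        fun t ht => Or.inr (by linarith)
    · intro t ht
      simp only [Set.mem_Ioi] at ht
      have : 0 < t - x := by linarith
      positivity
  have hmeas1 : AEStronglyMeasurable (fun t => (u t - u x) / (t - x) ^ (1 + α))
      (volume.restrict (Set.Ioc x (x+1))) :=
    (hcont.mono Set.Ioc_subset_Ioi_self).aestronglyMeasurable measurableSet_Ioc
  have hmeas2 : AEStronglyMeasurable (fun t => (u t - u x) / (t - x) ^ (1 + α))
      (volume.restrict (Set.Ioi (x+1))) :=
    (hcont.mono fun t ht => by simp only [Set.mem_Ioi] at *; linarith).aestronglyMeasurable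
      measurableSet_Ioi
  have hpart1 : IntegrableOn (fun t => (u t - u x) / (t - x) ^ (1 + α)) (Set.Ioc x (x+1)) := by
    have hint : IntegrableOn (fun t => C * (t - x) ^ (-α)) (Set.Ioc x (x+1)) := by
      have h1 : IntervalIntegrable (fun t : ℝ => t ^ (-α)) volume 0 1 :=
        intervalIntegral.intervalIntegrable_rpow' (by linarith)
      have h2 := (h1.comp_sub_right x)
      rw [zero_add, add_comm 1 x] at h2
      rw [intervalIntegrable_iff_integrableOn_Ioc_of_le (by linarith)] at h2
      exact h2.const_mul C
    apply Integrable.mono' hint hmeas1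
    filter_upwards [ae_restrict_mem measurableSet_Ioc] with t ht
    obtain ⟨ht1, ht2⟩ := ht
    have htx : 0 < t - x := by linarith
    have hlip : |u t - u x| ≤ C * (t - x) := by
      have := Convex.norm_image_sub_le_of_norm_deriv_le
        (f := fun y => u y) (s := Set.univ) (C := C)
        (fun y _ => u.differentiableAt) (fun y _ => hCle y) convex_univ
        (Set.mem_univ x) (Set.mem_univ t)
      simpa [Real.norm_eq_abs, abs_of_pos htx] using this
    rw [Real.norm_eq_abs, abs_div, abs_of_pos (by positivity : (0:ℝ) < (t - x) ^ (1+α))]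
    rw [div_le_iff₀ (by positivity)]
    calc |u t - u x| ≤ C * (t - x) := hlip
      _ = C * (t - x) ^ (-α) * (t - x) ^ (1 + α) := by
          rw [mul_assoc, ← Real.rpow_add htx, show -α + (1 + α) = 1 by ring, Real.rpow_one]
  have hpart2 : IntegrableOn (fun t => (u t - u x) / (t - x) ^ (1 + α)) (Set.Ioi (x+1)) := by
    have hint : IntegrableOn (fun t => (2*B) * (t - x) ^ (-(1+α))) (Set.Ioi (x+1)) := by
      have h1 : Integrable ((Set.Ioi (1:ℝ)).indicator (fun t => t ^ (-(1+α)))) := by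
        rw [integrable_indicator_iff measurableSet_Ioi]
        exact integrableOn_Ioi_rpow_of_lt (by linarith) one_pos
      have h2 := h1.comp_sub_right (μ := volume) x
      have heq : (fun t => ((Set.Ioi (1:ℝ)).indicator (fun t => t ^ (-(1+α)))) (t - x))
          = (Set.Ioi (x+1)).indicator (fun t => (t - x) ^ (-(1+α))) := by
        ext t
        by_cases h : t ∈ Set.Ioi (x+1)
        · rw [Set.indicator_of_mem h, Set.indicator_of_mem]
          simp only [Set.mem_Ioi] at h ⊢; linarith
        · rw [Set.indicator_of_notMem h, Set.indicator_of_notMem]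
          simp only [Set.mem_Ioi] at h ⊢; linarith
      rw [heq, integrable_indicator_iff measurableSet_Ioi] at h2
      exact h2.const_mul (2*B)
    apply Integrable.mono' hint hmeas2
    filter_upwards [ae_restrict_mem measurableSet_Ioi] with t ht
    simp only [Set.mem_Ioi] at ht
    have htx : 0 < t - x := by linarith
    rw [Real.norm_eq_abs, abs_div, abs_of_pos (by positivity : (0:ℝ) < (t - x) ^ (1+α))]
    rw [div_le_iff₀ (by positivity), Real.rpow_neg (le_of_lt htx)]
    rw [mul_assoc, inv_mul_cancel₀ (by positivity : ((t-x) ^ (1+α)) ≠ 0), mul_one]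
    calc |u t - u x| ≤ |u t| + |u x| := abs_sub _ _
      _ ≤ B + B := add_le_add (hBle t) (hBle x)
      _ = 2 * B := by ring
  have : Set.Ioi x = Set.Ioc x (x+1) ∪ Set.Ioi (x+1) := (Set.Ioc_union_Ioi_eq_Ioi (by linarith)).symm
  rw [this]
  exact hpart1.union hpart2

lemma one_side (α : ℝ) (hα : 0 < α) (hα1 : α < 1)
    (a b : ℝ) (hab : a < b) (φ ψ : SchwartzMap ℝ ℝ)
    (heq : ∀ x ∈ Set.Ico a b,
      Dright α (fun y => φ y) x = Dright α (fun y => ψ y) x)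
    (hb : ∀ x, b ≤ x → φ x = ψ x) :
    ∀ x, a ≤ x → φ x ≤ ψ x := by
  by_contra hcon
  push_neg at hcon
  obtain ⟨x₁, hx₁a, hx₁⟩ := hcon
  set u : ℝ → ℝ := fun t => φ t - ψ t with hu
  have hucont : Continuous u := φ.continuous.sub ψ.continuous
  obtain ⟨x₀, hx₀mem, hx₀max⟩ := isCompact_Icc.exists_isMaxOn (Set.nonempty_Icc.2 hab.le)
    hucont.continuousOn (s := Set.Icc a b)
  have hub : u b = 0 := by simp [hu, hb b le_rfl]
  have hmax : ∀ t, a ≤ t → u t ≤ u x₀ := by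
    intro t hat
    rcases le_or_gt t b with h | h
    · exact hx₀max ⟨hat, h⟩
    · have : u t = 0 := by simp [hu, hb t h.le]
      rw [this, ← hub]
      exact hx₀max ⟨hab.le, le_rfl⟩
  have hx₀pos : 0 < u x₀ := lt_of_lt_of_le (by simp [hu]; linarith) (hmax x₁ hx₁a)
  have hx₀b : x₀ < b := by
    rcases lt_or_eq_of_le hx₀mem.2 with h | h
    · exact h
    · exfalso; rw [h] at hx₀pos; rw [hub] at hx₀pos; exact lt_irrefl 0 hx₀pos
  -- Gamma nonzero
  have hΓ : Real.Gamma (-α) ≠ 0 := by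
    apply Real.Gamma_ne_zero
    intro m h
    have hm : (m:ℝ) = α := by
      have := neg_injective h.symm
      linarith
    rcases Nat.eq_zero_or_pos m with h0 | h0
    · rw [h0] at hm; simp at hm; linarith
    · have : (1:ℝ) ≤ (m:ℝ) := by exact_mod_cast h0
      linarith
  -- the zero integral
  have hintφ := integrand_integrable α hα hα1 φ x₀
  have hintψ := integrand_integrable α hα hα1 ψ x₀
  have hDeq := heq x₀ ⟨hx₀mem.1, hx₀b⟩
  have hint0 : ∫ t in Set.Ioi x₀, (u t - u x₀) / (t - x₀) ^ (1 + α) = 0 := by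
    have hsub : (fun t => (u t - u x₀) / (t - x₀) ^ (1 + α))
        = fun t => (φ t - φ x₀) / (t - x₀) ^ (1 + α) - (ψ t - ψ x₀) / (t - x₀) ^ (1 + α) := by
      funext t; rw [hu]; ring
    rw [hsub, integral_sub hintφ hintψ]
    unfold Dright at hDeq
    have := mul_left_cancel₀ (a := 1 / Real.Gamma (-α)) (by simp [hΓ]) hDeq
    rw [this]; ring
  -- integrand nonpositive
  set f : ℝ → ℝ := fun t => (u t - u x₀) / (t - x₀) ^ (1 + α) with hf
  have hfint : IntegrableOn f (Set.Ioi x₀) := by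
    have := integrand_integrable α hα hα1 (φ - ψ) x₀
    simpa [hf, hu, SchwartzMap.sub_apply] using this
  have hfnonpos : ∀ t ∈ Set.Ioi x₀, f t ≤ 0 := by
    intro t ht
    simp only [Set.mem_Ioi] at ht
    have htx : 0 < t - x₀ := by linarith
    apply div_nonpos_of_nonpos_of_nonneg
    · have := hmax t (le_trans hx₀mem.1 ht.le)
      linarith
    · positivity
  have hgnonneg : 0 ≤ᵐ[volume.restrict (Set.Ioi x₀)] fun t => -f t := by
    filter_upwards [ae_restrict_mem measurableSet_Ioi] with t ht
    simpa using hfnonpos t ht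
  have hgint : Integrable (fun t => -f t) (volume.restrict (Set.Ioi x₀)) := hfint.neg
  have hgzero : ∫ t in Set.Ioi x₀, -f t = 0 := by
    rw [integral_neg, hint0]; ring
  have hae : (fun t => -f t) =ᵐ[volume.restrict (Set.Ioi x₀)] 0 :=
    (integral_eq_zero_iff_of_nonneg_ae hgnonneg hgint).mp hgzero
  have hae2 : ∀ᵐ t, t ∈ Set.Ioi x₀ → -f t = 0 := (ae_restrict_iff' measurableSet_Ioi).mp hae
  rw [ae_iff] at hae2
  have hsub : Set.Ioi b ⊆ {t | ¬(t ∈ Set.Ioi x₀ → -f t = 0)} := by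
    intro t ht
    simp only [Set.mem_Ioi] at ht
    simp only [Set.mem_setOf_eq, Set.mem_Ioi, not_forall]
    refine ⟨by linarith, ?_⟩
    have hut : u t = 0 := by simp [hu, hb t (by linarith)]
    have : f t = -u x₀ / (t - x₀) ^ (1 + α) := by rw [hf]; simp [hut]
    rw [this]
    have htx : (0:ℝ) < t - x₀ := by linarith
    have : (0:ℝ) < (t - x₀) ^ (1 + α) := by positivity
    intro hcontra
    have : u x₀ / (t - x₀) ^ (1 + α) = 0 := by
      field_simp at hcontra ⊢
      linarith [hcontra]
    have := (div_eq_zero_iff.mp this)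
    rcases this with h | h
    · linarith
    · linarith
  have := measure_mono_null hsub hae2
  rw [Real.volume_Ioi] at this
  exact ENNReal.top_ne_zero this

/-- Uniqueness for the one-sided Dirichlet problem. -/
theorem dirichlet_uniqueness (α : ℝ) (hα : 0 < α) (hα1 : α < 1)
    (a b : ℝ) (hab : a < b) (φ ψ : SchwartzMap ℝ ℝ)
    (heq : ∀ x ∈ Set.Ico a b,
      Dright α (fun y => φ y) x = Dright α (fun y => ψ y) x)
    (hb : ∀ x, b ≤ x → φ x = ψ x) :
    ∀ x, a ≤ x → φ x = ψ x := by
  intro x hx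
  exact le_antisymm
    (one_side α hα hα1 a b hab φ ψ heq hb x hx)
    (one_side α hα hα1 a b hab ψ φ (fun y hy => (heq y hy).symm) (fun y hy => (hb y hy).symm) x hx)
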